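/- Let M be a rank r matroid without coloops on n elements. Then (r-i+1)·h_{i-1}(M) ≤ (n-i)·h_i(M) for all 1 ≤ i ≤ r, where h_i(M) is the h-vector of the independence complex of M. -/

import Mathlib

open Polynomial

variable {α : Type*}

/-- The rank of a set `A` in a matroid `M`: the largest cardinality of an independent
subset of `A`. -/
noncomputable def mr (M : Matroid α) (A : Set α) : ℕ :=
  sSup {n | ∃ I, M.Indep I ∧ I ⊆ A ∧ I.ncard = n}

/-- `mf M j` is the number of independent sets of `M` of cardinality `j`, i.e. the
number of faces of cardinality `j` of the independence complex of `M`. -/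
noncomputable def mf (M : Matroid α) (j : ℕ) : ℕ :=
  {I : Set α | M.Indep I ∧ I.ncard = j}.ncard

/-- The `h`-vector of the independence complex of a rank-`r` matroid `M`:
`h_i = ∑_{j=0}^i (-1)^{i-j} C(r-j, r-i) f_j`. -/
noncomputable def mh (M : Matroid α) (r i : ℕ) : ℤ :=
  ∑ j ∈ Finset.range (i + 1), (-1 : ℤ) ^ (i - j) * ((r - j).choose (r - i) : ℤ) * (mf M j : ℤ)

/-- Binomial coefficient `C(a,b)` for integers, with the convention that it is `0`
whenever `b < 0` or `b > a`. -/
def ch (a b : ℤ) : ℤ := if 0 ≤ b ∧ b ≤ a then (a.toNat.choose b.toNat : ℤ) else 0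

/-- `e` is a loop of `M`. -/
def mLoop (M : Matroid α) (e : α) : Prop := e ∈ M.closure ∅

/-- `e` is a coloop of `M`, i.e. a loop of the dual matroid. -/
def mColoop (M : Matroid α) (e : α) : Prop := e ∈ M✶.closure ∅

/-- `M` is connected: it is not the direct sum of two smaller matroids; equivalently,
`r(A) + r(E \ A) ≠ r(E)` for every proper nonempty subset `A` of the ground set. -/
def mConnected (M : Matroid α) : Prop :=
  M.E.Nonempty ∧ ∀ A ⊆ M.E, A.Nonempty → (M.E \ A).Nonempty →
    mr M A + mr M (M.E \ A) ≠ mr M M.E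

/-- The deletion `M - D`. -/
noncomputable def mdel (M : Matroid α) (D : Set α) : Matroid α := M.restrict (M.E \ D)

/-- The contraction `M / C`, defined as the dual of the deletion of `C` in the dual. -/
noncomputable def mcon (M : Matroid α) (C : Set α) : Matroid α := (mdel M✶ C)✶

/-- `P` is a parallel class of `M`: the set of all non-loop elements parallel to some
fixed non-loop element `e`. -/
def mParClass (M : Matroid α) (P : Set α) : Prop :=
  ∃ e ∈ M.E, ¬ mLoop M e ∧ P = {f | f ∈ M.E ∧ ¬ mLoop M f ∧ f ∈ M.closure {e}}

/-- `S` is a series class of `M`: a parallel class of the dual matroid. -/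
def mSerClass (M : Matroid α) (S : Set α) : Prop := mParClass M✶ S

/-- `T(M; x, 0)`: the Tutte polynomial of `M` (with ground set the whole fintype)
evaluated at `y = 0`, so that `T(M;x,0) = ∑_i b_i(M) x^i`. -/
noncomputable def bpoly [Fintype α] [DecidableEq α] (M : Matroid α) : Polynomial ℤ :=
  ∑ A : Finset α,
    (X - 1) ^ (mr M Set.univ - mr M (A : Set α)) *
      C ((-1 : ℤ) ^ (A.card - mr M (A : Set α)))

/-- Two elements of the ground set lie in the same connected component iff no
separator (a set `A` with `r(A) + r(E \ A) = r(E)`) splits them. -/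
def crel (M : Matroid α) (e f : α) : Prop :=
  e ∈ M.E ∧ f ∈ M.E ∧
    ∀ A ⊆ M.E, mr M A + mr M (M.E \ A) = mr M M.E → (e ∈ A ↔ f ∈ A)

/-- The number of connected components of `M`. -/
noncomputable def numComponents (M : Matroid α) : ℕ :=
  {S : Set α | ∃ e ∈ M.E, S = {f | crel M e f}}.ncard

section Proof16

open Set Finset

set_option linter.unusedSectionVars false

variable [Fintype α]

/-! ### Basic counting and finiteness -/

private lemma mfin (P : Set (Set α)) : P.Finite := P.toFinite

private lemma mf_zero (M : Matroid α) : mf M 0 = 1 := by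
  have h : {I : Set α | M.Indep I ∧ I.ncard = 0} = {∅} := by
    ext I
    simp only [Set.mem_setOf_eq, Set.mem_singleton_iff]
    constructor
    · rintro ⟨_, h2⟩
      exact (Set.ncard_eq_zero (Set.toFinite I)).mp h2
    · rintro rfl
      exact ⟨M.empty_indep, by simp⟩
  rw [mf, h, Set.ncard_singleton]

/-! ### Deletion and contraction of a single element -/

private noncomputable def del (M : Matroid α) (e : α) : Matroid α := M.restrict (M.E \ {e})

private lemma del_ground (M : Matroid α) (e : α) : (del M e).E = M.E \ {e} := rfl

private lemma del_indep {M : Matroid α} {e : α} {I : Set α} :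
    (del M e).Indep I ↔ M.Indep I ∧ e ∉ I := by
  rw [del, Matroid.restrict_indep_iff]
  constructor
  · rintro ⟨h, hsub⟩
    exact ⟨h, fun he => (hsub he).2 rfl⟩
  · rintro ⟨h, he⟩
    exact ⟨h, Set.subset_diff_singleton h.subset_ground he⟩

private noncomputable def con (M : Matroid α) (e : α) (he : M.Indep {e}) : Matroid α :=
  (IndepMatroid.ofFinite (Set.toFinite (M.E \ {e}))
    (fun I => e ∉ I ∧ M.Indep (insert e I))
    ⟨Set.notMem_empty e, by simpa using he⟩
    (fun I J hJ hIJ => ⟨fun hI => hJ.1 (hIJ hI), hJ.2.subset (Set.insert_subset_insert hIJ)⟩)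
    (by
      rintro I J ⟨heI, hI⟩ ⟨heJ, hJ⟩ hlt
      have hlt' : (insert e I).encard < (insert e J).encard := by
        rw [Set.encard_insert_of_notMem heI, Set.encard_insert_of_notMem heJ,
          ← (Set.toFinite I).cast_ncard_eq, ← (Set.toFinite J).cast_ncard_eq]
        have h1 : (I.ncard : ℕ∞) < (J.ncard : ℕ∞) := by exact_mod_cast hlt
        exact WithTop.add_lt_add_right (show (1 : ℕ∞) ≠ ⊤ by simp) h1
      obtain ⟨x, hx, hxi⟩ := hI.augment hJ hlt'
      have hxe : x ≠ e := fun h => hx.2 (h ▸ Set.mem_insert e I)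
      have hxJ : x ∈ J := by
        rcases hx.1 with h | h
        · exact absurd h hxe
        · exact h
      refine ⟨x, hxJ, fun h => hx.2 (Set.mem_insert_of_mem e h), ?_, ?_⟩
      · rintro (h | h)
        · exact hxe h.symm
        · exact heI h
      · rwa [Set.insert_comm]
      )
    (fun I hI => Set.subset_diff_singleton
      (fun x hx => hI.2.subset_ground (Set.mem_insert_of_mem e hx)) hI.1)).matroid

private lemma con_ground (M : Matroid α) (e : α) (he : M.Indep {e}) :
    (con M e he).E = M.E \ {e} := rfl

private lemma con_indep {M : Matroid α} {e : α} (he : M.Indep {e}) {I : Set α} :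
    (con M e he).Indep I ↔ e ∉ I ∧ M.Indep (insert e I) := by
  rw [con, IndepMatroid.matroid_indep_iff, IndepMatroid.ofFinite_indep]

/-! ### Rank facts -/

private lemma mr_ground_eq_of (N : Matroid α) (k : ℕ)
    (h1 : ∃ I, N.Indep I ∧ I.ncard = k) (h2 : ∀ I, N.Indep I → I.ncard ≤ k) :
    mr N N.E = k := by
  apply IsGreatest.csSup_eq
  constructor
  · obtain ⟨I, hI, hk⟩ := h1
    exact ⟨I, hI, hI.subset_ground, hk⟩
  · rintro m ⟨I, hI, -, rfl⟩
    exact h2 I hI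

private lemma mr_base {M : Matroid α} {B : Set α} (hB : M.IsBase B) : mr M M.E = B.ncard :=
  mr_ground_eq_of M _ ⟨B, hB.indep, rfl⟩ (fun I hI => by
    obtain ⟨B', hB', hIB'⟩ := hI.exists_isBase_superset
    exact (Set.ncard_le_ncard hIB' (Set.toFinite B')).trans
      (le_of_eq (hB'.ncard_eq_ncard_of_isBase hB)))

/-! ### Counting bijections -/

private lemma ncard_shift (P Q : Set (Set α)) (e : α)
    (h1 : ∀ I ∈ P, e ∈ I) (h2 : ∀ I ∈ P, I \ {e} ∈ Q)
    (h3 : ∀ J ∈ Q, e ∉ J) (h4 : ∀ J ∈ Q, insert e J ∈ P) :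
    P.ncard = Q.ncard := by
  have himg : (fun I => I \ {e}) '' P = Q := by
    apply Set.Subset.antisymm
    · rintro _ ⟨I, hI, rfl⟩
      exact h2 I hI
    · intro J hJ
      refine ⟨insert e J, h4 J hJ, ?_⟩
      show insert e J \ {e} = J
      rw [Set.insert_diff_of_mem _ (Set.mem_singleton e), Set.diff_singleton_eq_self (h3 J hJ)]
  have hinj : Set.InjOn (fun I => I \ {e}) P := by
    intro I1 hI1 I2 hI2 h
    simp only at h
    have : insert e (I1 \ {e}) = insert e (I2 \ {e}) := by rw [h]
    rwa [Set.insert_diff_singleton, Set.insert_diff_singleton,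
      Set.insert_eq_self.mpr (h1 I1 hI1), Set.insert_eq_self.mpr (h1 I2 hI2)] at this
  rw [← himg, Set.ncard_image_of_injOn hinj]

private lemma mf_split (M : Matroid α) (e : α) (j : ℕ) :
    mf M j = mf (del M e) j + {I : Set α | M.Indep I ∧ I.ncard = j ∧ e ∈ I}.ncard := by
  have hdel : {I : Set α | (del M e).Indep I ∧ I.ncard = j}
      = {I : Set α | M.Indep I ∧ I.ncard = j ∧ e ∉ I} := by
    ext I
    simp only [Set.mem_setOf_eq, del_indep]
    tauto
  rw [mf, mf, hdel, ← Set.ncard_union_eq (by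
      rw [Set.disjoint_left]
      rintro I ⟨-, -, h1⟩ ⟨-, -, h2⟩
      exact h1 h2) (mfin _) (mfin _)]
  congr 1
  ext I
  simp only [Set.mem_setOf_eq, Set.mem_union]
  tauto

private lemma mf_con (M : Matroid α) (e : α) (he : M.Indep {e}) (j : ℕ) :
    {I : Set α | M.Indep I ∧ I.ncard = j + 1 ∧ e ∈ I}.ncard = mf (con M e he) j := by
  rw [mf]
  apply ncard_shift _ _ e
  · rintro I ⟨-, -, h⟩
    exact h
  · rintro I ⟨hI, hc, heI⟩
    refine ⟨(con_indep he).mpr ⟨by simp, ?_⟩, ?_⟩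
    · rwa [Set.insert_diff_singleton, Set.insert_eq_self.mpr heI]
    · simp [Set.ncard_diff_singleton_of_mem heI, hc]
  · rintro J ⟨hJ, -⟩
    exact ((con_indep he).mp hJ).1
  · rintro J ⟨hJ, hc⟩
    obtain ⟨heJ, hind⟩ := (con_indep he).mp hJ
    exact ⟨hind, by rw [Set.ncard_insert_of_notMem heJ (Set.toFinite J), hc],
      Set.mem_insert e J⟩

private lemma mf_coloop (M : Matroid α) (e : α)
    (hco : ∀ I, M.Indep I → M.Indep (insert e I)) (j : ℕ) :
    {I : Set α | M.Indep I ∧ I.ncard = j + 1 ∧ e ∈ I}.ncard = mf (del M e) j := by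
  rw [mf]
  apply ncard_shift _ _ e
  · rintro I ⟨-, -, h⟩
    exact h
  · rintro I ⟨hI, hc, heI⟩
    refine ⟨del_indep.mpr ⟨hI.subset Set.diff_subset, by simp⟩, ?_⟩
    simp [Set.ncard_diff_singleton_of_mem heI, hc]
  · rintro J ⟨hJ, -⟩
    exact (del_indep.mp hJ).2
  · rintro J ⟨hJ, hc⟩
    obtain ⟨hind, heJ⟩ := del_indep.mp hJ
    exact ⟨hco J hind, by rw [Set.ncard_insert_of_notMem heJ (Set.toFinite J), hc],
      Set.mem_insert e J⟩

/-! ### Sum algebra for h-vectors -/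

private noncomputable def Hs (r i : ℕ) (f : ℕ → ℤ) : ℤ :=
  ∑ j ∈ Finset.range (i + 1), (-1 : ℤ) ^ (i - j) * ((r - j).choose (r - i) : ℤ) * f j

private lemma mh_eq_Hs (M : Matroid α) (r i : ℕ) :
    mh M r i = Hs r i (fun j => (mf M j : ℤ)) := rfl

private lemma Hs_aux (r i : ℕ) (f f' f'' : ℕ → ℤ)
    (h0 : f 0 = f' 0) (hs : ∀ j, f (j + 1) = f' (j + 1) + f'' j) :
    Hs r i f = Hs r i f' + ∑ j ∈ Finset.range i,
      (-1 : ℤ) ^ (i - (j + 1)) * ((r - (j + 1)).choose (r - i) : ℤ) * f'' j := by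
  classical
  have hf : ∀ j, f j = f' j + (if j = 0 then 0 else f'' (j - 1)) := by
    intro j
    cases j with
    | zero => simp [h0]
    | succ m => simp [hs m]
  have h1 : Hs r i f = Hs r i f' + ∑ j ∈ Finset.range (i + 1),
      (-1 : ℤ) ^ (i - j) * ((r - j).choose (r - i) : ℤ) * (if j = 0 then 0 else f'' (j - 1)) := by
    rw [Hs, Hs, ← Finset.sum_add_distrib]
    exact Finset.sum_congr rfl fun j _ => by rw [hf j]; ring
  rw [h1, Finset.sum_range_succ']
  simp

private lemma Hs_split (r i : ℕ) (hi : 1 ≤ i) (f f' f'' : ℕ → ℤ)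
    (h0 : f 0 = f' 0) (hs : ∀ j, f (j + 1) = f' (j + 1) + f'' j) :
    Hs r i f = Hs r i f' + Hs (r - 1) (i - 1) f'' := by
  rw [Hs_aux r i f f' f'' h0 hs]
  congr 1
  rw [Hs]
  have hii : i - 1 + 1 = i := by omega
  rw [hii]
  refine Finset.sum_congr rfl fun j hj => ?_
  have e1 : i - (j + 1) = i - 1 - j := by omega
  have e2 : r - (j + 1) = r - 1 - j := by omega
  have e3 : r - i = r - 1 - (i - 1) := by omega
  rw [e1, e2, e3]

private lemma Hs_cone (r i : ℕ) (hir : i < r) (f f' : ℕ → ℤ)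
    (h0 : f 0 = f' 0) (hs : ∀ j, f (j + 1) = f' (j + 1) + f' j) :
    Hs r i f = Hs (r - 1) i f' := by
  rw [Hs_aux r i f f' f' h0 hs]
  rw [Hs, Hs, Finset.sum_range_succ, Finset.sum_range_succ, add_right_comm,
    ← Finset.sum_add_distrib]
  have hlast : (-1 : ℤ) ^ (i - i) * ((r - i).choose (r - i) : ℤ) * f' i
      = (-1 : ℤ) ^ (i - i) * ((r - 1 - i).choose (r - 1 - i) : ℤ) * f' i := by
    simp [Nat.choose_self]
  rw [hlast]
  congr 1
  refine Finset.sum_congr rfl fun j hj => ?_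
  rw [Finset.mem_range] at hj
  -- Pascal + sign juggling
  have hn : r - j = (r - 1 - j) + 1 := by omega
  have hk : r - i = (r - 1 - i) + 1 := by omega
  have hpascal : ((r - j).choose (r - i) : ℤ)
      = ((r - 1 - j).choose (r - 1 - i) : ℤ) + ((r - 1 - j).choose (r - i) : ℤ) := by
    rw [hn, hk, Nat.choose_succ_succ']
    push_cast
    rw [← hk]
  have hsign : (-1 : ℤ) ^ (i - j) = (-1 : ℤ) ^ (i - (j + 1)) * (-1) := by
    have : i - j = (i - (j + 1)) + 1 := by omega
    rw [this, pow_succ]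
  have e2 : r - (j + 1) = r - 1 - j := by omega
  rw [hpascal, hsign, e2]
  ring

private lemma Hs_top (r : ℕ) (f f' : ℕ → ℤ)
    (h0 : f 0 = f' 0) (hs : ∀ j, f (j + 1) = f' (j + 1) + f' j) :
    Hs r r f = f' r := by
  rw [Hs_aux r r f f' f' h0 hs, Hs, Finset.sum_range_succ, add_right_comm,
    ← Finset.sum_add_distrib]
  have hz : ∀ j ∈ Finset.range r,
      (-1 : ℤ) ^ (r - j) * ((r - j).choose (r - r) : ℤ) * f' j
        + (-1 : ℤ) ^ (r - (j + 1)) * ((r - (j + 1)).choose (r - r) : ℤ) * f' j = 0 := by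
    intro j hj
    rw [Finset.mem_range] at hj
    have hsign : (-1 : ℤ) ^ (r - j) = (-1 : ℤ) ^ (r - (j + 1)) * (-1) := by
      have : r - j = (r - (j + 1)) + 1 := by omega
      rw [this, pow_succ]
    simp only [Nat.sub_self, Nat.choose_zero_right, Nat.cast_one, hsign]
    ring
  rw [Finset.sum_congr rfl hz, Finset.sum_const, Nat.sub_self, Nat.choose_zero_right]
  simp

private lemma mh_zero (M : Matroid α) (r : ℕ) : mh M r 0 = 1 := by
  rw [mh, Finset.sum_range_one, mf_zero]
  simp

/-! ### Nonnegativity of the h-vector -/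

private lemma mh_nonneg_aux : ∀ (n : ℕ) (N : Matroid α) (r i : ℕ), N.E.ncard = n →
    mr N N.E = r → i ≤ r → 0 ≤ mh N r i := by
  intro n
  induction n using Nat.strong_induction_on with
  | _ n IH =>
  intro N r i hn hr hi
  rcases Nat.eq_zero_or_pos i with rfl | hi1
  · rw [mh_zero]; norm_num
  obtain ⟨B, hB⟩ := N.exists_isBase
  have hBr : B.ncard = r := by rw [← hr, mr_base hB]
  have hr1 : 1 ≤ r := le_trans hi1 hi
  have hBne : B.Nonempty := by
    rw [← Set.ncard_pos (Set.toFinite B)]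
    omega
  obtain ⟨e, heB⟩ := hBne
  have heE : e ∈ N.E := hB.subset_ground heB
  have he : N.Indep {e} := hB.indep.subset (by simpa using heB)
  have hnpos : 1 ≤ n := by
    have h : 0 < N.E.ncard := (Set.ncard_pos (Set.toFinite N.E)).mpr ⟨e, heE⟩
    omega
  have hdelground : (del N e).E.ncard = n - 1 := by
    rw [del_ground, Set.ncard_diff_singleton_of_mem heE, hn]
  have hindep_le : ∀ I, N.Indep I → I.ncard ≤ r := by
    intro I hI
    obtain ⟨B', hB', hIB'⟩ := hI.exists_isBase_superset
    calc I.ncard ≤ B'.ncard := Set.ncard_le_ncard hIB' (Set.toFinite B')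
      _ = r := by rw [hB'.ncard_eq_ncard_of_isBase hB, hBr]
  have hf0 : (mf N 0 : ℤ) = (mf (del N e) 0 : ℤ) := by rw [mf_zero, mf_zero]
  by_cases hall : ∀ B', N.IsBase B' → e ∈ B'
  · -- e is a coloop
    have hco : ∀ I, N.Indep I → N.Indep (insert e I) := by
      intro I hI
      obtain ⟨B'', hB'', hIB''⟩ := hI.exists_isBase_superset
      exact hB''.indep.subset (Set.insert_subset (hall _ hB'') hIB'')
    have hfs : ∀ j, (mf N (j + 1) : ℤ) = (mf (del N e) (j + 1) : ℤ) + (mf (del N e) j : ℤ) := by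
      intro j
      have h := mf_split N e (j + 1)
      rw [mf_coloop N e hco j] at h
      exact_mod_cast h
    have hdel_le : ∀ I, (del N e).Indep I → I.ncard ≤ r - 1 := by
      intro I hI
      rw [del_indep] at hI
      obtain ⟨B'', hB'', hIB''⟩ := hI.1.exists_isBase_superset
      have hsub : I ⊆ B'' \ {e} := Set.subset_diff_singleton hIB'' hI.2
      calc I.ncard ≤ (B'' \ {e}).ncard := Set.ncard_le_ncard hsub (Set.toFinite _)
        _ = r - 1 := by
            rw [Set.ncard_diff_singleton_of_mem (hall _ hB''),
              hB''.ncard_eq_ncard_of_isBase hB, hBr]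
    rcases lt_or_eq_of_le hi with hilt | hieq
    · have hdelrank : mr (del N e) (del N e).E = r - 1 := by
        apply mr_ground_eq_of
        · refine ⟨B \ {e}, del_indep.mpr ⟨hB.indep.subset Set.diff_subset, by simp⟩, ?_⟩
          rw [Set.ncard_diff_singleton_of_mem heB, hBr]
        · exact hdel_le
      have heq : mh N r i = mh (del N e) (r - 1) i := by
        rw [mh_eq_Hs, mh_eq_Hs]
        exact Hs_cone r i hilt (fun j => (mf N j : ℤ)) (fun j => (mf (del N e) j : ℤ)) hf0 hfs
      rw [heq]
      exact IH (n - 1) (by omega) _ _ _ hdelground hdelrank (by omega)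
    · subst hieq
      have heq : mh N i i = (mf (del N e) i : ℤ) := by
        rw [mh_eq_Hs]
        exact Hs_top i (fun j => (mf N j : ℤ)) (fun j => (mf (del N e) j : ℤ)) hf0 hfs
      rw [heq]
      exact Int.natCast_nonneg _
  · push_neg at hall
    obtain ⟨B', hB', heB'⟩ := hall
    have hdelrank : mr (del N e) (del N e).E = r := by
      apply mr_ground_eq_of
      · exact ⟨B', del_indep.mpr ⟨hB'.indep, heB'⟩,
          by rw [hB'.ncard_eq_ncard_of_isBase hB, hBr]⟩
      · exact fun I hI => hindep_le I (del_indep.mp hI).1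
    have hconrank : mr (con N e he) (con N e he).E = r - 1 := by
      apply mr_ground_eq_of
      · refine ⟨B \ {e}, (con_indep he).mpr ⟨by simp, ?_⟩, ?_⟩
        · rw [Set.insert_diff_singleton, Set.insert_eq_self.mpr heB]
          exact hB.indep
        · rw [Set.ncard_diff_singleton_of_mem heB, hBr]
      · intro I hI
        obtain ⟨heI, hins⟩ := (con_indep he).mp hI
        have h := hindep_le _ hins
        rw [Set.ncard_insert_of_notMem heI (Set.toFinite I)] at h
        omega
    have hconground : (con N e he).E.ncard = n - 1 := by
      rw [con_ground, Set.ncard_diff_singleton_of_mem heE, hn]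
    have hfs : ∀ j, (mf N (j + 1) : ℤ)
        = (mf (del N e) (j + 1) : ℤ) + (mf (con N e he) j : ℤ) := by
      intro j
      have h := mf_split N e (j + 1)
      rw [mf_con N e he j] at h
      exact_mod_cast h
    have heq : mh N r i = mh (del N e) r i + mh (con N e he) (r - 1) (i - 1) := by
      rw [mh_eq_Hs, mh_eq_Hs, mh_eq_Hs]
      exact Hs_split r i hi1 (fun j => (mf N j : ℤ)) (fun j => (mf (del N e) j : ℤ)) (fun j => (mf (con N e he) j : ℤ)) hf0 hfs
    rw [heq]
    have h1 := IH (n - 1) (by omega) _ _ _ hdelground hdelrank hi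
    have h2 := IH (n - 1) (by omega) (con N e he) (r - 1) (i - 1) hconground hconrank (by omega)
    linarith

private lemma mh_nonneg (N : Matroid α) (r i : ℕ) (hr : mr N N.E = r) (hi : i ≤ r) :
    0 ≤ mh N r i :=
  mh_nonneg_aux N.E.ncard N r i rfl hr hi

/-! ### The double-counting identity and the final assembly -/

private lemma sum_mf_del (M : Matroid α) (j : ℕ) :
    ∑ e ∈ (Set.toFinite M.E).toFinset, mf (del M e) j = (M.E.ncard - j) * mf M j := by
  classical
  set EF : Finset α := (Set.toFinite M.E).toFinset with hEF
  set S : Finset (Set α) := (mfin {I : Set α | M.Indep I ∧ I.ncard = j}).toFinset with hS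
  have hmf : mf M j = S.card := by rw [mf, Set.ncard_eq_toFinset_card]
  have hdel : ∀ e, mf (del M e) j = (S.filter (fun I => e ∉ I)).card := by
    intro e
    rw [mf, Set.ncard_eq_toFinset_card]
    congr 1
    ext I
    simp only [Set.Finite.mem_toFinset, Set.mem_setOf_eq, Finset.mem_filter, hS, del_indep]
    tauto
  calc ∑ e ∈ EF, mf (del M e) j
      = ∑ e ∈ EF, ∑ I ∈ S, if e ∉ I then 1 else 0 := by
        refine Finset.sum_congr rfl fun e _ => ?_
        rw [hdel e, Finset.card_filter]
    _ = ∑ I ∈ S, ∑ e ∈ EF, if e ∉ I then 1 else 0 := Finset.sum_comm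
    _ = ∑ I ∈ S, (M.E.ncard - j) := by
        refine Finset.sum_congr rfl fun I hI => ?_
        rw [← Finset.card_filter]
        obtain ⟨hInd, hIc⟩ : M.Indep I ∧ I.ncard = j := by
          simpa [hS, Set.Finite.mem_toFinset] using hI
        have hcards := Finset.card_filter_add_card_filter_not
          (s := EF) (p := fun e => e ∈ I)
        have hin : (EF.filter (fun e => e ∈ I)).card = j := by
          have heq : EF.filter (fun e => e ∈ I) = (Set.toFinite I).toFinset := by
            ext x
            simp only [Finset.mem_filter, Set.Finite.mem_toFinset, hEF]
            exact ⟨fun h => h.2, fun h => ⟨hInd.subset_ground h, h⟩⟩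
          rw [heq, ← Set.ncard_eq_toFinset_card, hIc]
        have hEFcard : EF.card = M.E.ncard := by rw [hEF, ← Set.ncard_eq_toFinset_card]
        omega
    _ = (M.E.ncard - j) * mf M j := by
        rw [Finset.sum_const, hmf, smul_eq_mul, mul_comm]

private lemma key_identity (M : Matroid α) (r n i : ℕ) (hrn : r ≤ n) (hi1 : 1 ≤ i)
    (hir : i ≤ r) (hn : M.E.ncard = n) :
    (∑ e ∈ (Set.toFinite M.E).toFinset, mh (del M e) r i)
      = ((n : ℤ) - i) * mh M r i - ((r : ℤ) - i + 1) * mh M r (i - 1) := by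
  have h1 : (∑ e ∈ (Set.toFinite M.E).toFinset, mh (del M e) r i)
      = ∑ j ∈ Finset.range (i + 1),
          (-1 : ℤ) ^ (i - j) * ((r - j).choose (r - i) : ℤ) * (((n : ℤ) - j) * (mf M j : ℤ)) := by
    have hrw : (∑ e ∈ (Set.toFinite M.E).toFinset, mh (del M e) r i)
        = ∑ e ∈ (Set.toFinite M.E).toFinset, ∑ j ∈ Finset.range (i + 1),
            (-1 : ℤ) ^ (i - j) * ((r - j).choose (r - i) : ℤ) * (mf (del M e) j : ℤ) := rfl
    rw [hrw, Finset.sum_comm]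
    refine Finset.sum_congr rfl fun j hj => ?_
    rw [Finset.mem_range] at hj
    have hjn : j ≤ n := by omega
    rw [← Finset.mul_sum]
    congr 1
    have hsum : ((∑ e ∈ (Set.toFinite M.E).toFinset, mf (del M e) j : ℕ) : ℤ)
        = (((M.E.ncard - j) * mf M j : ℕ) : ℤ) :=
      congrArg (fun t : ℕ => (t : ℤ)) (sum_mf_del M j)
    push_cast at hsum
    rw [hsum, hn, Nat.cast_sub hjn]
  rw [h1]
  have h2 : ∀ j ∈ Finset.range (i + 1),
      (-1 : ℤ) ^ (i - j) * ((r - j).choose (r - i) : ℤ) * (((n : ℤ) - j) * (mf M j : ℤ))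
        = ((n : ℤ) - i) * ((-1 : ℤ) ^ (i - j) * ((r - j).choose (r - i) : ℤ) * (mf M j : ℤ))
          + (-1 : ℤ) ^ (i - j) * ((r - j).choose (r - i) : ℤ) * ((i : ℤ) - j) * (mf M j : ℤ) :=
    fun j _ => by ring
  rw [Finset.sum_congr rfl h2, Finset.sum_add_distrib, ← Finset.mul_sum]
  have h3 : (∑ j ∈ Finset.range (i + 1),
      (-1 : ℤ) ^ (i - j) * ((r - j).choose (r - i) : ℤ) * ((i : ℤ) - j) * (mf M j : ℤ))
        = -(((r : ℤ) - i + 1) * mh M r (i - 1)) := by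
    rw [Finset.sum_range_succ]
    simp only [sub_self, mul_zero, zero_mul, add_zero]
    rw [mh]
    have hii : i - 1 + 1 = i := by omega
    rw [hii, Finset.mul_sum, ← Finset.sum_neg_distrib]
    refine Finset.sum_congr rfl fun j hj => ?_
    rw [Finset.mem_range] at hj
    have hnat := Nat.choose_succ_right_eq (r - j) (r - i)
    have hd0 : (r - j) - (r - i) = i - j := by omega
    rw [hd0] at hnat
    have hcs := congrArg (fun t : ℕ => (t : ℤ)) hnat
    push_cast at hcs
    rw [Nat.cast_sub (show j ≤ i by omega), Nat.cast_sub (show i ≤ r from hir)] at hcs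
    have hc1 : r - (i - 1) = (r - i) + 1 := by omega
    have hsign : (-1 : ℤ) ^ (i - j) = (-1 : ℤ) ^ (i - 1 - j) * (-1) := by
      have h : i - j = (i - 1 - j) + 1 := by omega
      rw [h, pow_succ]
    rw [hc1, hsign]
    linear_combination ((-1 : ℤ) ^ (i - 1 - j) * (mf M j : ℤ)) * hcs
  rw [h3]
  have hmh : (∑ j ∈ Finset.range (i + 1),
      (-1 : ℤ) ^ (i - j) * ((r - j).choose (r - i) : ℤ) * (mf M j : ℤ)) = mh M r i := rfl
  rw [hmh]
  ring

end Proof16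

/-- if `M` is a rank-`r` matroid on `n` elements without coloops, then
`(r-i+1)·h_{i-1}(M) ≤ (n-i)·h_i(M)` for `1 ≤ i ≤ r`. -/
theorem stmt16 [Fintype α] (M : Matroid α) (r n : ℕ) (hr : mr M M.E = r)
    (hn : M.E.ncard = n) (hcl : ∀ e, ¬ mColoop M e) :
    ∀ i, 1 ≤ i → i ≤ r →
      ((r : ℤ) - i + 1) * mh M r (i - 1) ≤ ((n : ℤ) - i) * mh M r i := by
  intro i hi1 hir
  obtain ⟨B, hB⟩ := M.exists_isBase
  have hBr : B.ncard = r := by rw [← hr, mr_base hB]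
  have hrn : r ≤ n := by
    rw [← hBr, ← hn]
    exact Set.ncard_le_ncard hB.subset_ground (Set.toFinite _)
  have hpos : ∀ e ∈ (Set.toFinite M.E).toFinset, 0 ≤ mh (del M e) r i := by
    intro e he'
    have heE : e ∈ M.E := (Set.Finite.mem_toFinset _).mp he'
    have hex : ∃ B', M.IsBase B' ∧ e ∉ B' := by
      by_contra hcon
      push_neg at hcon
      apply hcl e
      have hne : ¬ M✶.Indep {e} := by
        intro hind
        rw [Matroid.dual_indep_iff_exists (by simpa using heE)] at hind
        obtain ⟨B', hB', hdis⟩ := hind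
        exact (Set.disjoint_left.mp hdis rfl) (hcon B' hB')
      have hbasis : M✶.IsBasis ∅ {e} := by
        rw [Matroid.isBasis_iff (by simpa using heE)]
        refine ⟨M✶.empty_indep, Set.empty_subset _, fun J hJ _ hJe => ?_⟩
        rcases Set.subset_singleton_iff_eq.mp hJe with rfl | rfl
        · rfl
        · exact absurd hJ hne
      exact Matroid.empty_isBasis_iff.mp hbasis rfl
    obtain ⟨B', hB', heB'⟩ := hex
    have hdelrank : mr (del M e) (del M e).E = r := by
      apply mr_ground_eq_of
      · exact ⟨B', del_indep.mpr ⟨hB'.indep, heB'⟩,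
          by rw [hB'.ncard_eq_ncard_of_isBase hB, hBr]⟩
      · intro I hI
        obtain ⟨B'', hB'', hIB''⟩ := (del_indep.mp hI).1.exists_isBase_superset
        calc I.ncard ≤ B''.ncard := Set.ncard_le_ncard hIB'' (Set.toFinite _)
          _ = r := by rw [hB''.ncard_eq_ncard_of_isBase hB, hBr]
    exact mh_nonneg (del M e) r i hdelrank hir
  have hkey := key_identity M r n i hrn hi1 hir hn
  have hsum : 0 ≤ ∑ e ∈ (Set.toFinite M.E).toFinset, mh (del M e) r i :=
    Finset.sum_nonneg hpos
  linarith
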